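/- Time-averaged Feynman–Kac semigroup factorization: define Q_l(f) := G_{l−1}·L_l(f), Q_{l,k} := Q_l Q_{l+1}⋯Q_k, P_{l,k}(f) := Q_{l,k}(f)/Q_{l,k}(1), and H_{l,k} := Q_{l,k}(1)/Q_{l,k−1}(1). Let Φ̄^{(l)} be the time-averaged map on sequences of probability measures, Φ̄^{(l)}_n(η) = (1/(n+1))Σ_{p=0}^n Φ_l(η_p), and Φ̄^{(k,l)} = Φ̄^{(k)}∘⋯∘Φ̄^{(l)} its semigroup. Then for all l ≤ k, Φ̄^{(k,l)}(η) = Ψ̄^{(k,l)}(η)P_{l,k}, where Ψ̄^{(k,l)} = Ψ̄^{(l),H_{l,k}}∘Ψ̄^{(l),H_{l,k−1}}∘⋯∘Ψ̄^{(l),H_{l,l}} and Ψ̄^{(l),H}_n(η) = (1/(n+1))Σ_{p=0}^n Ψ^H(η_p) is the time-averaged Boltzmann–Gibbs transformation Ψ^H(μ)(f) = μ(Hf)/μ(H). -/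

import Mathlib

open MeasureTheory ProbabilityTheory
open scoped ENNReal

/-- Boltzmann–Gibbs transformation `Ψ^H(μ)(dx) = H(x) μ(dx) / μ(H)`. -/
noncomputable def BG {α : Type*} [MeasurableSpace α] (H : α → ℝ) (μ : Measure α) :
    Measure α :=
  ((μ.withDensity fun x => ENNReal.ofReal (H x)) Set.univ)⁻¹ •
    μ.withDensity fun x => ENNReal.ofReal (H x)

variable {S : ℕ → Type*} [∀ l, MeasurableSpace (S l)]

/-- Feynman–Kac transformation `Φ_{l+1}(μ) = Ψ^{G_l}(μ) L_{l+1}`. -/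
noncomputable def PhiFK (G : ∀ l, S l → ℝ) (L : ∀ l, Kernel (S l) (S (l + 1)))
    (l : ℕ) (μ : Measure (S l)) : Measure (S (l + 1)) :=
  (BG (G l) μ).bind (L l)

/-- Time-averaged Feynman–Kac map on flows of measures:
`Φ̄_n(η) = (1/(n+1)) Σ_{p=0}^n Φ(η_p)`. -/
noncomputable def PhiBar (G : ∀ l, S l → ℝ) (L : ∀ l, Kernel (S l) (S (l + 1)))
    (l : ℕ) (η : ℕ → Measure (S l)) : ℕ → Measure (S (l + 1)) :=
  fun n => ((n : ℝ≥0∞) + 1)⁻¹ • ∑ p ∈ Finset.range (n + 1), PhiFK G L l (η p)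

/-- Semigroup of the time-averaged Feynman–Kac maps:
`Φ̄^{(l+j+1,l+1)} = Φ̄^{(l+j+1)} ∘ ⋯ ∘ Φ̄^{(l+1)}` (with `j + 1` factors). -/
noncomputable def PhiBarC (G : ∀ l, S l → ℝ) (L : ∀ l, Kernel (S l) (S (l + 1)))
    (l : ℕ) : (j : ℕ) → (ℕ → Measure (S l)) → ℕ → Measure (S (l + j + 1))
  | 0 => PhiBar G L l
  | j + 1 => fun η => PhiBar G L (l + j + 1) (PhiBarC G L l j η)

/-- The Feynman–Kac integral semigroup `Q_{l,k} = Q_l ⋯ Q_k` with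
`Q_l(f) = G_{l-1} · L_l(f)`; here `QQ G L l j` corresponds to `Q_{l+1,l+j+1}`,
mapping functions on `S^{(l+j+1)}` to functions on `S^{(l)}`. -/
noncomputable def QQ (G : ∀ l, S l → ℝ) (L : ∀ l, Kernel (S l) (S (l + 1)))
    (l : ℕ) : (j : ℕ) → (S (l + j + 1) → ℝ) → S l → ℝ
  | 0 => fun f x => G l x * ∫ y, f y ∂(L l x)
  | j + 1 => fun f => QQ G L l j fun x => G (l + j + 1) x * ∫ y, f y ∂(L (l + j + 1) x)

/-- Time-averaged Boltzmann–Gibbs transformation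
`Ψ̄^{(l),H}_n(η) = (1/(n+1)) Σ_{p=0}^n Ψ^H(η_p)`. -/
noncomputable def PsiBar (l : ℕ) (H : S l → ℝ) (η : ℕ → Measure (S l)) :
    ℕ → Measure (S l) :=
  fun n => ((n : ℝ≥0∞) + 1)⁻¹ • ∑ p ∈ Finset.range (n + 1), BG H (η p)

/-- The potential functions `H_{l,k} = Q_{l,k}(1)/Q_{l,k-1}(1)` (with the convention
`Q_{l,l-1}(1) = 1`). -/
noncomputable def Hfun (G : ∀ l, S l → ℝ) (L : ∀ l, Kernel (S l) (S (l + 1)))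
    (l : ℕ) : ℕ → S l → ℝ
  | 0 => QQ G L l 0 fun _ => 1
  | j + 1 => fun x => QQ G L l (j + 1) (fun _ => 1) x / QQ G L l j (fun _ => 1) x

/-- The composition `Ψ̄^{(k,l)} = Ψ̄^{(l),H_{l,k}} ∘ ⋯ ∘ Ψ̄^{(l),H_{l,l}}`. -/
noncomputable def PsiBarC (G : ∀ l, S l → ℝ) (L : ∀ l, Kernel (S l) (S (l + 1)))
    (l : ℕ) : ℕ → (ℕ → Measure (S l)) → ℕ → Measure (S l)
  | 0 => PsiBar l (Hfun G L l 0)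
  | j + 1 => fun η => PsiBar l (Hfun G L l (j + 1)) (PsiBarC G L l j η)

open scoped NNReal

section Helpers
variable {α β : Type*} [MeasurableSpace α] [MeasurableSpace β]

lemma integrable_of_bdd {μ : Measure α} [IsFiniteMeasure μ] {f : α → ℝ} (hf : Measurable f)
    {C : ℝ} (hb : ∀ x, |f x| ≤ C) : Integrable f μ :=
  (integrable_const C).mono' hf.aestronglyMeasurable (ae_of_all _ fun x => by
    simpa [Real.norm_eq_abs] using hb x)

lemma abs_integral_le {μ : Measure α} [IsProbabilityMeasure μ] {f : α → ℝ}
    {C : ℝ} (hb : ∀ x, |f x| ≤ C) : |∫ x, f x ∂μ| ≤ C := by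
  have h := norm_integral_le_of_norm_le_const (μ := μ) (f := f) (C := C)
    (ae_of_all _ fun x => by simpa [Real.norm_eq_abs] using hb x)
  simpa [Real.norm_eq_abs] using h

lemma integral_pos_of_pos {μ : Measure α} [IsProbabilityMeasure μ] {f : α → ℝ}
    (hf : Measurable f) (hpos : ∀ x, 0 < f x) {C : ℝ} (hb : ∀ x, |f x| ≤ C) :
    0 < ∫ x, f x ∂μ := by
  rw [integral_pos_iff_support_of_nonneg (fun x => (hpos x).le) (integrable_of_bdd hf hb)]
  have h : Function.support f = Set.univ := by
    ext x; simp [Function.support, (hpos x).ne']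
  rw [h]
  simp

lemma BG_integral {μ : Measure α} [IsFiniteMeasure μ] {H : α → ℝ} (hH : Measurable H)
    (hH0 : ∀ x, 0 ≤ H x) {CH : ℝ} (hHb : ∀ x, H x ≤ CH)
    (hpos : 0 < ∫ x, H x ∂μ) {f : α → ℝ} (hf : Measurable f) :
    ∫ x, f x ∂(BG H μ) = (∫ x, H x * f x ∂μ) / ∫ x, H x ∂μ := by
  have hHint : Integrable H μ := integrable_of_bdd hH (fun x => by
    rw [abs_of_nonneg (hH0 x)]; exact hHb x)
  have hc : (μ.withDensity fun x => ENNReal.ofReal (H x)) Set.univ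
      = ENNReal.ofReal (∫ x, H x ∂μ) := by
    rw [withDensity_apply _ MeasurableSet.univ, setLIntegral_univ,
      ← ofReal_integral_eq_lintegral_ofReal hHint (ae_of_all _ hH0)]
  have hd : (μ.withDensity fun x => ENNReal.ofReal (H x)) =
      μ.withDensity fun x => ((Real.toNNReal (H x) : ℝ≥0) : ℝ≥0∞) := rfl
  have hint : ∫ x, f x ∂(μ.withDensity fun x => ENNReal.ofReal (H x))
      = ∫ x, H x * f x ∂μ := by
    rw [hd, integral_withDensity_eq_integral_smul hH.real_toNNReal]
    refine integral_congr_ae (ae_of_all _ fun x => ?_)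
    simp [NNReal.smul_def, Real.coe_toNNReal _ (hH0 x)]
  rw [BG, integral_smul_measure, hc, hint, ← ENNReal.ofReal_inv_of_pos hpos,
    ENNReal.toReal_ofReal (by positivity), smul_eq_mul, inv_mul_eq_div]

lemma BG_prob {μ : Measure α} [IsProbabilityMeasure μ] {H : α → ℝ} (hH : Measurable H)
    (hpos : ∀ x, 0 < H x) {C : ℝ} (hb : ∀ x, H x ≤ C) :
    IsProbabilityMeasure (BG H μ) := by
  set ν := μ.withDensity fun x => ENNReal.ofReal (H x) with hν
  have h0 : ν Set.univ ≠ 0 := by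
    rw [hν, withDensity_apply _ MeasurableSet.univ, setLIntegral_univ,
      ← pos_iff_ne_zero, lintegral_pos_iff_support hH.ennreal_ofReal]
    have h : Function.support (fun x => ENNReal.ofReal (H x)) = Set.univ := by
      ext x
      simp only [Function.mem_support, Set.mem_univ, iff_true]
      exact (ENNReal.ofReal_pos.mpr (hpos x)).ne'
    rw [h]; simp
  have htop : ν Set.univ ≠ ⊤ := by
    rw [hν, withDensity_apply _ MeasurableSet.univ, setLIntegral_univ]
    refine ne_top_of_le_ne_top (b := ENNReal.ofReal C * μ Set.univ) ?_ ?_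
    · simp [ENNReal.mul_ne_top, measure_ne_top]
    · calc ∫⁻ x, ENNReal.ofReal (H x) ∂μ ≤ ∫⁻ _, ENNReal.ofReal C ∂μ :=
            lintegral_mono fun x => ENNReal.ofReal_le_ofReal (hb x)
        _ = ENNReal.ofReal C * μ Set.univ := by rw [lintegral_const]
  constructor
  rw [BG, Measure.smul_apply, smul_eq_mul, ENNReal.inv_mul_cancel h0 htop]

lemma bind_prob {μ : Measure α} [IsProbabilityMeasure μ] (κ : Kernel α β) [IsMarkovKernel κ] :
    IsProbabilityMeasure (μ.bind κ) := by
  constructor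
  rw [Measure.bind_apply MeasurableSet.univ (Kernel.measurable κ).aemeasurable]
  simp

lemma integral_bind' {μ : Measure α} [IsProbabilityMeasure μ] (κ : Kernel α β) [IsMarkovKernel κ]
    {f : β → ℝ} (hf : Measurable f) {C : ℝ} (hb : ∀ x, |f x| ≤ C) :
    ∫ y, f y ∂(μ.bind κ) = ∫ x, ∫ y, f y ∂(κ x) ∂μ := by
  have hbind : μ.bind κ = (μ.compProd κ).snd := by
    ext s hs
    rw [Measure.bind_apply hs (Kernel.measurable κ).aemeasurable, Measure.snd_apply hs,
      Measure.compProd_apply (measurable_snd hs)]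
    exact lintegral_congr fun a => rfl
  have hint : Integrable (fun p : α × β => f p.2) (μ.compProd κ) :=
    integrable_of_bdd (hf.comp measurable_snd) (fun p => hb p.2)
  rw [hbind, Measure.snd, integral_map measurable_snd.aemeasurable hf.aestronglyMeasurable,
    Measure.integral_compProd hint]

lemma avg_prob {μ : ℕ → Measure α} (h : ∀ p, IsProbabilityMeasure (μ p)) (n : ℕ) :
    IsProbabilityMeasure (((n : ℝ≥0∞) + 1)⁻¹ • ∑ p ∈ Finset.range (n + 1), μ p) := by
  constructor
  rw [Measure.smul_apply, Measure.finset_sum_apply, smul_eq_mul]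
  have h1 : ∀ p ∈ Finset.range (n + 1), (μ p) Set.univ = 1 := fun p _ => (h p).measure_univ
  rw [Finset.sum_congr rfl h1, Finset.sum_const, Finset.card_range, nsmul_eq_mul, mul_one]
  have h2 : ((n + 1 : ℕ) : ℝ≥0∞) = (n : ℝ≥0∞) + 1 := by push_cast; ring
  rw [h2, ENNReal.inv_mul_cancel (lt_of_lt_of_le zero_lt_one le_add_self).ne'
    (ENNReal.add_ne_top.mpr ⟨ENNReal.natCast_ne_top n, ENNReal.one_ne_top⟩)]

lemma integral_avg {μ : ℕ → Measure α} (hμ : ∀ p, IsProbabilityMeasure (μ p)) (n : ℕ)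
    {f : α → ℝ} (hf : Measurable f) {C : ℝ} (hb : ∀ x, |f x| ≤ C) :
    ∫ x, f x ∂(((n : ℝ≥0∞) + 1)⁻¹ • ∑ p ∈ Finset.range (n + 1), μ p)
      = (((n : ℝ≥0∞) + 1)⁻¹).toReal *
        ∑ p ∈ Finset.range (n + 1), ∫ x, f x ∂(μ p) := by
  rw [integral_smul_measure, integral_finset_sum_measure (fun p _ => integrable_of_bdd hf hb),
    smul_eq_mul]

end Helpers

section QQlemmas
variable {S : ℕ → Type*} [∀ l, MeasurableSpace (S l)]

/-- `Nice f`: measurable and bounded. -/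
def Nice {α : Type*} [MeasurableSpace α] (f : α → ℝ) : Prop :=
  Measurable f ∧ ∃ C, 0 ≤ C ∧ ∀ x, |f x| ≤ C

lemma nice_of {α : Type*} [MeasurableSpace α] {f : α → ℝ} (hf : Measurable f) {C : ℝ}
    (hb : ∀ x, |f x| ≤ C) : Nice f :=
  ⟨hf, max C 0, le_max_right _ _, fun x => (hb x).trans (le_max_left _ _)⟩

variable {G : ∀ l, S l → ℝ} {L : ∀ l, Kernel (S l) (S (l + 1))}

lemma Lint_meas (hL : ∀ l, IsMarkovKernel (L l)) (m : ℕ) {f : S (m + 1) → ℝ}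
    (hf : Measurable f) : Measurable fun x => ∫ y, f y ∂(L m x) := by
  have := hL m
  exact ((hf.stronglyMeasurable.comp_measurable
    (measurable_snd : Measurable fun p : S m × S (m+1) => p.2)).integral_kernel_prod_right'
    (κ := L m)).measurable

lemma Qstep_nice (hGmeas : ∀ l, Measurable (G l)) (hGpos : ∀ l x, 0 < G l x)
    (hGbd : ∀ l, ∃ C, ∀ x, G l x ≤ C) (hL : ∀ l, IsMarkovKernel (L l))
    (m : ℕ) {f : S (m + 1) → ℝ} (hf : Nice f) :
    Nice fun x => G m x * ∫ y, f y ∂(L m x) := by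
  have := hL m
  obtain ⟨hfm, C, hC0, hb⟩ := hf
  obtain ⟨CG, hCG⟩ := hGbd m
  refine ⟨(hGmeas m).mul (Lint_meas hL m hfm), max CG 0 * C, by positivity, fun x => ?_⟩
  rw [abs_mul, abs_of_nonneg (hGpos m x).le]
  exact mul_le_mul ((hCG x).trans (le_max_left _ _)) (abs_integral_le hb) (abs_nonneg _)
    (by positivity)

lemma QQ_nice (hGmeas : ∀ l, Measurable (G l)) (hGpos : ∀ l x, 0 < G l x)
    (hGbd : ∀ l, ∃ C, ∀ x, G l x ≤ C) (hL : ∀ l, IsMarkovKernel (L l)) (l : ℕ) :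
    ∀ (j : ℕ) {f : S (l + j + 1) → ℝ}, Nice f → Nice (QQ G L l j f)
  | 0, f, hf => Qstep_nice hGmeas hGpos hGbd hL l hf
  | j + 1, f, hf =>
    QQ_nice hGmeas hGpos hGbd hL l j (Qstep_nice hGmeas hGpos hGbd hL (l + j + 1) hf)

lemma Qstep_abs_le (hGpos : ∀ l x, 0 < G l x) (hL : ∀ l, IsMarkovKernel (L l))
    (m : ℕ) {f h : S (m + 1) → ℝ} (hf : Nice f) (hh : Nice h)
    (hle : ∀ x, |f x| ≤ h x) :
    ∀ x, |G m x * ∫ y, f y ∂(L m x)| ≤ G m x * ∫ y, h y ∂(L m x) := by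
  intro x
  have := hL m
  obtain ⟨hfm, C, _, hb⟩ := hf
  obtain ⟨hhm, C', _, hb'⟩ := hh
  rw [abs_mul, abs_of_nonneg (hGpos m x).le]
  refine mul_le_mul_of_nonneg_left ?_ (hGpos m x).le
  calc |∫ y, f y ∂(L m x)| ≤ ∫ y, |f y| ∂(L m x) := by
        simpa [Real.norm_eq_abs] using norm_integral_le_integral_norm (μ := L m x) f
    _ ≤ ∫ y, h y ∂(L m x) :=
        integral_mono ((integrable_of_bdd hfm hb).abs) (integrable_of_bdd hhm hb') hle

lemma QQ_abs_le (hGmeas : ∀ l, Measurable (G l)) (hGpos : ∀ l x, 0 < G l x)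
    (hGbd : ∀ l, ∃ C, ∀ x, G l x ≤ C) (hL : ∀ l, IsMarkovKernel (L l)) (l : ℕ) :
    ∀ (j : ℕ) {f h : S (l + j + 1) → ℝ}, Nice f → Nice h →
    (∀ x, |f x| ≤ h x) → ∀ x, |QQ G L l j f x| ≤ QQ G L l j h x
  | 0, f, h, hf, hh, hle => Qstep_abs_le hGpos hL l hf hh hle
  | j + 1, f, h, hf, hh, hle =>
    QQ_abs_le hGmeas hGpos hGbd hL l j (Qstep_nice hGmeas hGpos hGbd hL _ hf)
      (Qstep_nice hGmeas hGpos hGbd hL _ hh) (Qstep_abs_le hGpos hL _ hf hh hle)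

lemma Qstep_pos (hGpos : ∀ l x, 0 < G l x) (hL : ∀ l, IsMarkovKernel (L l))
    (m : ℕ) {f : S (m + 1) → ℝ} (hf : Nice f) (hpos : ∀ x, 0 < f x) :
    ∀ x, 0 < G m x * ∫ y, f y ∂(L m x) := by
  intro x
  have := hL m
  obtain ⟨hfm, C, _, hb⟩ := hf
  exact mul_pos (hGpos m x) (integral_pos_of_pos hfm hpos hb)

lemma QQ_pos (hGmeas : ∀ l, Measurable (G l)) (hGpos : ∀ l x, 0 < G l x)
    (hGbd : ∀ l, ∃ C, ∀ x, G l x ≤ C) (hL : ∀ l, IsMarkovKernel (L l)) (l : ℕ) :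
    ∀ (j : ℕ) {f : S (l + j + 1) → ℝ}, Nice f → (∀ x, 0 < f x) →
    ∀ x, 0 < QQ G L l j f x
  | 0, f, hf, hp => Qstep_pos hGpos hL l hf hp
  | j + 1, f, hf, hp =>
    QQ_pos hGmeas hGpos hGbd hL l j (Qstep_nice hGmeas hGpos hGbd hL _ hf)
      (Qstep_pos hGpos hL _ hf hp)

lemma QQ_smul (l : ℕ) : ∀ (j : ℕ) (c : ℝ) (f : S (l + j + 1) → ℝ),
    QQ G L l j (fun x => c * f x) = fun x => c * QQ G L l j f x
  | 0, c, f => by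
    funext x
    show G l x * ∫ y, c * f y ∂(L l x) = c * (G l x * ∫ y, f y ∂(L l x))
    rw [integral_const_mul]; ring
  | j + 1, c, f => by
    show QQ G L l j _ = _
    have h1 : (fun x => G (l + j + 1) x * ∫ y, c * f y ∂(L (l + j + 1) x))
        = fun x => c * (G (l + j + 1) x * ∫ y, f y ∂(L (l + j + 1) x)) := by
      funext x; rw [integral_const_mul]; ring
    rw [h1, QQ_smul l j c]
    rfl

end QQlemmas

section MainLemmas
variable {S : ℕ → Type*} [∀ l, MeasurableSpace (S l)]
  {G : ∀ l, S l → ℝ} {L : ∀ l, Kernel (S l) (S (l + 1))}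

lemma Qstep_one (hL : ∀ l, IsMarkovKernel (L l)) (m : ℕ) :
    (fun x => G m x * ∫ _, (1 : ℝ) ∂(L m x)) = G m := by
  funext x
  have := hL m
  simp

lemma nice_one {α : Type*} [MeasurableSpace α] : Nice (fun _ : α => (1 : ℝ)) :=
  nice_of measurable_const (C := 1) (fun _ => by norm_num)

lemma nice_const {α : Type*} [MeasurableSpace α] {C : ℝ} (hC : 0 ≤ C) :
    Nice (fun _ : α => C) :=
  ⟨measurable_const, C, hC, fun _ => by rw [abs_of_nonneg hC]⟩

lemma QQ_const (l j : ℕ) (C : ℝ) :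
    QQ G L l j (fun _ => C) = fun x => C * QQ G L l j (fun _ => 1) x := by
  have h : (fun _ : S (l + j + 1) => C) = fun x => C * (fun _ => (1 : ℝ)) x := by
    funext x; ring
  rw [h, QQ_smul]

variable (hGmeas : ∀ l, Measurable (G l)) (hGpos : ∀ l x, 0 < G l x)
  (hGbd : ∀ l, ∃ C, ∀ x, G l x ≤ C) (hL : ∀ l, IsMarkovKernel (L l))

include hGmeas hGpos hGbd hL

lemma QQ_one_pos (l j : ℕ) : ∀ x, 0 < QQ G L l j (fun _ => 1) x :=
  QQ_pos hGmeas hGpos hGbd hL l j nice_one (fun _ => one_pos)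

lemma QQ_ratio_bound (l j : ℕ) {f : S (l + j + 1) → ℝ} (hf : Measurable f)
    {C : ℝ} (hC0 : 0 ≤ C) (hb : ∀ x, |f x| ≤ C) :
    ∀ x, |QQ G L l j f x / QQ G L l j (fun _ => 1) x| ≤ C := by
  intro x
  have h1 := QQ_one_pos hGmeas hGpos hGbd hL l j x
  have h2 : |QQ G L l j f x| ≤ C * QQ G L l j (fun _ => 1) x := by
    have h3 := QQ_abs_le hGmeas hGpos hGbd hL l j (nice_of hf hb) (nice_const hC0)
      (fun y => hb y) x
    rwa [QQ_const] at h3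
  rw [abs_div, abs_of_pos h1, div_le_iff₀ h1]
  exact h2

lemma Hfun_nice_pos (l : ℕ) (j : ℕ) :
    Nice (Hfun G L l j) ∧ ∀ x, 0 < Hfun G L l j x := by
  cases j with
  | zero =>
    exact ⟨QQ_nice hGmeas hGpos hGbd hL l 0 nice_one,
      QQ_pos hGmeas hGpos hGbd hL l 0 nice_one (fun _ => one_pos)⟩
  | succ j =>
    obtain ⟨CG0, hCG0⟩ := hGbd (l + j + 1)
    set CG := max CG0 0 with hCGdef
    have hCG : ∀ x, |G (l + j + 1) x| ≤ CG := fun x => by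
      rw [abs_of_nonneg (hGpos _ x).le]; exact (hCG0 x).trans (le_max_left _ _)
    have hone : ∀ x, 0 < QQ G L l j (fun _ => 1) x := QQ_one_pos hGmeas hGpos hGbd hL l j
    have heq : QQ G L l (j + 1) (fun _ => 1) = QQ G L l j (G (l + j + 1)) := by
      show QQ G L l j _ = _
      rw [Qstep_one hL]
    have hpos : ∀ x, 0 < Hfun G L l (j + 1) x := by
      intro x
      exact div_pos (QQ_pos hGmeas hGpos hGbd hL l (j + 1) nice_one (fun _ => one_pos) x)
        (hone x)
    refine ⟨⟨?_, CG, le_max_right _ _, ?_⟩, hpos⟩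
    · exact ((QQ_nice hGmeas hGpos hGbd hL l (j + 1) nice_one).1).div
        ((QQ_nice hGmeas hGpos hGbd hL l j nice_one).1)
    · intro x
      show |QQ G L l (j + 1) (fun _ => 1) x / QQ G L l j (fun _ => 1) x| ≤ CG
      rw [heq]
      exact QQ_ratio_bound hGmeas hGpos hGbd hL l j (hGmeas _) (le_max_right _ _) hCG x

lemma BG_G_prob {l : ℕ} {μ : Measure (S l)} [IsProbabilityMeasure μ] :
    IsProbabilityMeasure (BG (G l) μ) := by
  obtain ⟨CG, hCG⟩ := hGbd l
  exact BG_prob (hGmeas l) (hGpos l) hCG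

lemma PhiFK_prob {l : ℕ} {μ : Measure (S l)} [IsProbabilityMeasure μ] :
    IsProbabilityMeasure (PhiFK G L l μ) := by
  haveI := BG_G_prob hGmeas hGpos hGbd hL (μ := μ)
  haveI := hL l
  exact bind_prob (L l)

lemma PhiBarC_prob (l : ℕ) : ∀ (j : ℕ) (η : ℕ → Measure (S l)),
    (∀ n, IsProbabilityMeasure (η n)) → ∀ n, IsProbabilityMeasure (PhiBarC G L l j η n)
  | 0, η, hη, n => by
    refine avg_prob (fun p => ?_) n
    haveI := hη p
    exact PhiFK_prob hGmeas hGpos hGbd hL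
  | j + 1, η, hη, n => by
    refine avg_prob (fun p => ?_) n
    haveI := PhiBarC_prob l j η hη p
    exact PhiFK_prob hGmeas hGpos hGbd hL

lemma BG_Hfun_prob {l : ℕ} (j : ℕ) {μ : Measure (S l)} [IsProbabilityMeasure μ] :
    IsProbabilityMeasure (BG (Hfun G L l j) μ) := by
  obtain ⟨⟨hm, C, hC0, hb⟩, hpos⟩ := Hfun_nice_pos hGmeas hGpos hGbd hL l j
  exact BG_prob hm hpos (fun x => (le_abs_self _).trans (hb x))

lemma PsiBarC_prob (l : ℕ) : ∀ (j : ℕ) (η : ℕ → Measure (S l)),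
    (∀ n, IsProbabilityMeasure (η n)) → ∀ n, IsProbabilityMeasure (PsiBarC G L l j η n)
  | 0, η, hη, n => by
    refine avg_prob (fun p => ?_) n
    haveI := hη p
    exact BG_Hfun_prob hGmeas hGpos hGbd hL 0
  | j + 1, η, hη, n => by
    refine avg_prob (fun p => ?_) n
    haveI := PsiBarC_prob l j η hη p
    exact BG_Hfun_prob hGmeas hGpos hGbd hL (j + 1)

end MainLemmas

/-- Factorization of the time-averaged Feynman–Kac semigroup:
`Φ̄^{(k,l)}(η) = Ψ̄^{(k,l)}(η) P_{l,k}` where `P_{l,k}(f) = Q_{l,k}(f)/Q_{l,k}(1)`,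
stated in weak (integral) form. -/
theorem stmt17 {S : ℕ → Type*} [∀ l, MeasurableSpace (S l)]
    (G : ∀ l, S l → ℝ) (hGmeas : ∀ l, Measurable (G l))
    (hGpos : ∀ l x, 0 < G l x) (hGbd : ∀ l, ∃ C, ∀ x, G l x ≤ C)
    (L : ∀ l, Kernel (S l) (S (l + 1))) (hL : ∀ l, IsMarkovKernel (L l)) :
    ∀ (l j : ℕ) (η : ℕ → Measure (S l)), (∀ n, IsProbabilityMeasure (η n)) →
      ∀ (n : ℕ) (f : S (l + j + 1) → ℝ), Measurable f → (∃ C, ∀ x, |f x| ≤ C) →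
        ∫ y, f y ∂(PhiBarC G L l j η n) =
          ∫ x, QQ G L l j f x / QQ G L l j (fun _ => 1) x
            ∂(PsiBarC G L l j η n) := by
  intro l j
  induction j with
  | zero =>
    intro η hη n f hf hbd
    obtain ⟨C0, hb0⟩ := hbd
    have hC0 : (0:ℝ) ≤ max C0 0 := le_max_right _ _
    have hb : ∀ x, |f x| ≤ max C0 0 := fun x => (hb0 x).trans (le_max_left _ _)
    obtain ⟨CG0, hCG0⟩ := hGbd l
    have hCG : ∀ x, |G l x| ≤ max CG0 0 := fun x => by
      rw [abs_of_nonneg (hGpos l x).le]; exact (hCG0 x).trans (le_max_left _ _)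
    haveI := hL l
    obtain ⟨⟨hHm, CH, hCH0, hHb⟩, hHpos⟩ := Hfun_nice_pos hGmeas hGpos hGbd hL l 0
    have hrm : Measurable fun x => QQ G L l 0 f x / QQ G L l 0 (fun _ => 1) x :=
      ((QQ_nice hGmeas hGpos hGbd hL l 0 (nice_of hf hb)).1).div
        ((QQ_nice hGmeas hGpos hGbd hL l 0 nice_one).1)
    have hrb := QQ_ratio_bound hGmeas hGpos hGbd hL l 0 hf hC0 hb
    show ∫ y, f y ∂(PhiBar G L l η n)
        = ∫ x, QQ G L l 0 f x / QQ G L l 0 (fun _ => 1) x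
          ∂(PsiBar l (Hfun G L l 0) η n)
    simp only [PhiBar, PsiBar]
    rw [integral_avg (fun p => by
          haveI := hη p; exact PhiFK_prob hGmeas hGpos hGbd hL) n hf hb,
        integral_avg (fun p => by
          haveI := hη p; exact BG_Hfun_prob hGmeas hGpos hGbd hL 0) n hrm hrb]
    congr 1
    refine Finset.sum_congr rfl fun p _ => ?_
    haveI := hη p
    haveI : IsProbabilityMeasure (BG (G l) (η p)) := BG_G_prob hGmeas hGpos hGbd hL
    have hLf : Measurable fun x => ∫ y, f y ∂(L l x) := Lint_meas hL l hf
    rw [PhiFK, integral_bind' (L l) hf hb,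
      BG_integral (hGmeas l) (fun x => (hGpos l x).le) hCG0
        (integral_pos_of_pos (hGmeas l) (hGpos l) hCG) hLf,
      BG_integral hHm (fun x => (hHpos x).le) (fun x => (le_abs_self _).trans (hHb x))
        (integral_pos_of_pos hHm hHpos hHb) hrm]
    have hone : ∀ x : S l, ∫ y, (1:ℝ) ∂(L l x) = 1 := fun x => by simp
    congr 1
    · refine integral_congr_ae (ae_of_all _ fun x => ?_)
      show G l x * ∫ y, f y ∂(L l x)
          = (G l x * ∫ y, (1:ℝ) ∂(L l x)) *
            ((G l x * ∫ y, f y ∂(L l x)) / (G l x * ∫ y, (1:ℝ) ∂(L l x)))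
      have hG := (hGpos l x).ne'
      rw [hone]
      field_simp
    · refine integral_congr_ae (ae_of_all _ fun x => ?_)
      show G l x = G l x * ∫ y, (1:ℝ) ∂(L l x)
      rw [hone, mul_one]
  | succ j IH =>
    intro η hη n f hf hbd
    obtain ⟨C0, hb0⟩ := hbd
    have hC0 : (0:ℝ) ≤ max C0 0 := le_max_right _ _
    have hb : ∀ x, |f x| ≤ max C0 0 := fun x => (hb0 x).trans (le_max_left _ _)
    obtain ⟨CG0, hCG0⟩ := hGbd (l + j + 1)
    have hCG : ∀ x, |G (l + j + 1) x| ≤ max CG0 0 := fun x => by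
      rw [abs_of_nonneg (hGpos _ x).le]; exact (hCG0 x).trans (le_max_left _ _)
    haveI := hL (l + j + 1)
    have hν : ∀ p, IsProbabilityMeasure (PhiBarC G L l j η p) := fun p =>
      PhiBarC_prob hGmeas hGpos hGbd hL l j η hη p
    have hμ : ∀ p, IsProbabilityMeasure (PsiBarC G L l j η p) := fun p =>
      PsiBarC_prob hGmeas hGpos hGbd hL l j η hη p
    obtain ⟨hQm, CQ, hCQ0, hQb⟩ :=
      Qstep_nice hGmeas hGpos hGbd hL (l + j + 1) (nice_of hf hb)
    have hrm : Measurable fun x =>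
        QQ G L l (j+1) f x / QQ G L l (j+1) (fun _ => 1) x :=
      ((QQ_nice hGmeas hGpos hGbd hL l (j+1) (nice_of hf hb)).1).div
        ((QQ_nice hGmeas hGpos hGbd hL l (j+1) nice_one).1)
    have hrb := QQ_ratio_bound hGmeas hGpos hGbd hL l (j+1) hf hC0 hb
    obtain ⟨⟨hHm, CH, hCH0, hHb⟩, hHpos⟩ := Hfun_nice_pos hGmeas hGpos hGbd hL l (j+1)
    show ∫ y, f y ∂(PhiBar G L (l+j+1) (PhiBarC G L l j η) n)
        = ∫ x, QQ G L l (j+1) f x / QQ G L l (j+1) (fun _ => 1) x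
          ∂(PsiBar l (Hfun G L l (j+1)) (PsiBarC G L l j η) n)
    simp only [PhiBar, PsiBar]
    refine (integral_avg (μ := fun p => PhiFK G L (l+j+1) (PhiBarC G L l j η p))
        (fun p => by haveI := hν p; exact PhiFK_prob hGmeas hGpos hGbd hL) n hf hb).trans
      (Eq.trans ?_ (integral_avg
        (μ := fun p => BG (Hfun G L l (j+1)) (PsiBarC G L l j η p))
        (fun p => by haveI := hμ p; exact BG_Hfun_prob hGmeas hGpos hGbd hL (j+1))
        n hrm hrb).symm)
    congr 1
    refine Finset.sum_congr rfl fun p _ => ?_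
    haveI := hν p
    haveI := hμ p
    haveI : IsProbabilityMeasure (BG (G (l+j+1)) (PhiBarC G L l j η p)) :=
      BG_G_prob hGmeas hGpos hGbd hL
    have hLf : Measurable fun x => ∫ y, f y ∂(L (l+j+1) x) := Lint_meas hL _ hf
    rw [PhiFK, integral_bind' (L (l+j+1)) hf hb,
      BG_integral (hGmeas _) (fun x => (hGpos _ x).le) hCG0
        (integral_pos_of_pos (hGmeas _) (hGpos _) hCG) hLf]
    have e1 := IH η hη p (fun x => G (l+j+1) x * ∫ y, f y ∂(L (l+j+1) x)) hQm ⟨CQ, hQb⟩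
    have e2 := IH η hη p (G (l+j+1)) (hGmeas _) ⟨max CG0 0, hCG⟩
    rw [e1, e2,
      BG_integral hHm (fun x => (hHpos x).le) (fun x => (le_abs_self _).trans (hHb x))
        (integral_pos_of_pos hHm hHpos hHb) hrm]
    have hQone : QQ G L l (j + 1) (fun _ => 1) = QQ G L l j (G (l + j + 1)) := by
      show QQ G L l j _ = _
      rw [Qstep_one hL]
    congr 1
    · refine integral_congr_ae (ae_of_all _ fun x => ?_)
      have hB := (QQ_one_pos hGmeas hGpos hGbd hL l j x).ne'
      have hA1 := (QQ_one_pos hGmeas hGpos hGbd hL l (j+1) x).ne'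
      show QQ G L l (j+1) f x / QQ G L l j (fun _ => 1) x
          = (QQ G L l (j+1) (fun _ => 1) x / QQ G L l j (fun _ => 1) x) *
            (QQ G L l (j+1) f x / QQ G L l (j+1) (fun _ => 1) x)
      field_simp
    · refine integral_congr_ae (ae_of_all _ fun x => ?_)
      show QQ G L l j (G (l+j+1)) x / QQ G L l j (fun _ => 1) x
          = QQ G L l (j+1) (fun _ => 1) x / QQ G L l j (fun _ => 1) x
      rw [hQone]
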